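/- Let G be a locally compact Hausdorff group with bi-invariant Haar measure μ, and A ⊆ G open, precompact, non-empty with μ(A⁻¹·A) ≤ (2−ε)μ(A) for some ε > 0. Then there exists a compact open subgroup H of G such that A·A⁻¹ is a union of finitely many right cosets of H. -/

import Mathlib

open scoped Pointwise ENNReal NNReal
open MeasureTheory Set

private lemma aux_small_doubling {G : Type*} [Group G] [TopologicalSpace G]
    [IsTopologicalGroup G] [LocallyCompactSpace G] [T2Space G]
    [MeasurableSpace G] [BorelSpace G]
    (ν : MeasureTheory.Measure G) [ν.IsHaarMeasure] [ν.Regular]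
    (A : Set G) (hopen : IsOpen A) (hpre : IsCompact (closure A)) (hne : A.Nonempty)
    (hlt : ν (A⁻¹ * A) < 2 * ν A) :
    ∃ H : Subgroup G, IsCompact (H : Set G) ∧ IsOpen (H : Set G) ∧
      ∃ T : Finset G, A * A⁻¹ = ⋃ t ∈ T, (H : Set G) * {t} := by
  have hA0 : 0 < ν A := hopen.measure_pos ν hne
  have hAfin : ν A ≠ ⊤ := ((measure_mono subset_closure).trans_lt hpre.measure_lt_top).ne
  set S : Set G := A * A⁻¹ with hSdef
  set c : ℝ≥0∞ := 2 * ν A - ν (A⁻¹ * A) with hcdef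
  have hc0 : 0 < c := tsub_pos_of_lt hlt
  -- the key quantitative fact: every point of S = A * A⁻¹ moves A by at most a bit
  have key : ∀ g ∈ S, c ≤ ν (g • A ∩ A) := by
    rintro g ⟨a, ha, binv, hbinv, rfl⟩
    set b : G := binv⁻¹ with hbdef
    have hb : b ∈ A := hbinv
    have hsub : a⁻¹ • A ∪ b⁻¹ • A ⊆ A⁻¹ * A := by
      rintro x (⟨y, hy, rfl⟩ | ⟨y, hy, rfl⟩)
      · exact mul_mem_mul (Set.inv_mem_inv.2 ha) hy
      · exact mul_mem_mul (Set.inv_mem_inv.2 hb) hy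
    have hie := measure_union_add_inter (μ := ν) (a⁻¹ • A) ((hopen.smul b⁻¹).measurableSet)
    have h4 : 2 * ν A ≤ ν (A⁻¹ * A) + ν (a⁻¹ • A ∩ b⁻¹ • A) := by
      calc 2 * ν A = ν (a⁻¹ • A) + ν (b⁻¹ • A) := by
            rw [measure_smul, measure_smul, two_mul]
        _ = ν (a⁻¹ • A ∪ b⁻¹ • A) + ν (a⁻¹ • A ∩ b⁻¹ • A) := hie.symm
        _ ≤ ν (A⁻¹ * A) + ν (a⁻¹ • A ∩ b⁻¹ • A) :=
            add_le_add (measure_mono hsub) le_rfl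
    have h5 : c ≤ ν (a⁻¹ • A ∩ b⁻¹ • A) := tsub_le_iff_left.2 h4
    have h6 : (a * binv) • A ∩ A = a • (b⁻¹ • A ∩ a⁻¹ • A) := by
      rw [smul_set_inter, smul_smul, smul_smul, mul_inv_cancel, one_smul, hbdef, inv_inv]
    rw [h6, measure_smul, inter_comm]
    exact h5
  have hSopen : IsOpen S := hopen.mul_right
  obtain ⟨a₀, ha₀⟩ := hne
  have h1S : (1 : G) ∈ S := ⟨a₀, ha₀, a₀⁻¹, Set.inv_mem_inv.2 ha₀, mul_inv_cancel a₀⟩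
  -- inner regularity: a compact `K ⊆ A` capturing almost all the mass
  obtain ⟨K, hKA, hKcomp, hKbig⟩ : ∃ K ⊆ A, IsCompact K ∧ ν A - c < ν K :=
    hopen.exists_lt_isCompact (ENNReal.sub_lt_self hAfin hA0.ne' hc0.ne')
  have hKfin : ν K ≠ ⊤ := hKcomp.measure_lt_top.ne
  have hdiffK : ν (A \ K) < c := by
    have h7 : ν A < c + ν K := ENNReal.lt_add_of_sub_lt_left (Or.inl hAfin) hKbig
    rw [measure_diff hKA hKcomp.measurableSet.nullMeasurableSet hKfin]
    exact (ENNReal.sub_lt_iff_lt_right hKfin (measure_mono hKA)).2 h7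
  obtain ⟨V, hV1, hVK⟩ := compact_open_separated_mul_left hKcomp hopen hKA
  obtain ⟨O, hOV, hOopen, hO1⟩ := mem_nhds_iff.1 hV1
  have hVsmall : ∀ v ∈ O, ν (v • A \ A) < c := by
    intro v hv
    have hsub1 : v • A \ A ⊆ v • (A \ K) := by
      rintro x ⟨⟨y, hy, rfl⟩, hx2⟩
      refine ⟨y, ⟨hy, fun hyK => hx2 ?_⟩, rfl⟩
      have : v * y ∈ V * K := mul_mem_mul (hOV hv) hyK
      simpa [smul_eq_mul] using hVK this
    calc ν (v • A \ A) ≤ ν (v • (A \ K)) := measure_mono hsub1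
      _ = ν (A \ K) := measure_smul ν v _
      _ < c := hdiffK
  have hSclosed : IsClosed S := by
    rw [← isOpen_compl_iff]
    rw [isOpen_iff_forall_mem_open]
    intro g₀ hg₀
    refine ⟨g₀ • O, ?_, hOopen.smul g₀, ⟨1, hO1, mul_one g₀⟩⟩
    rintro x ⟨v, hv, rfl⟩ hxS
    have hdisj : g₀ • A ∩ A = ∅ := by
      rw [eq_empty_iff_forall_notMem]
      rintro z ⟨⟨y, hy, rfl⟩, hz2⟩
      exact hg₀ ⟨g₀ * y, hz2, y⁻¹, Set.inv_mem_inv.2 hy, by group⟩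
    have hsub2 : (g₀ • v) • A ∩ A ⊆ g₀ • (v • A \ A) := by
      rintro x ⟨hx1, hx2⟩
      refine ⟨g₀⁻¹ • x, ⟨?_, fun hmem => ?_⟩, smul_inv_smul _ _⟩
      · obtain ⟨a, ha, rfl⟩ := hx1
        exact ⟨a, ha, by simp only [smul_eq_mul]; group⟩
      · have : x ∈ g₀ • A ∩ A := ⟨⟨g₀⁻¹ • x, hmem, smul_inv_smul _ _⟩, hx2⟩
        rw [hdisj] at this
        exact this
    have hle : ν ((g₀ • v) • A ∩ A) < c := by
      calc ν ((g₀ • v) • A ∩ A) ≤ ν (g₀ • (v • A \ A)) := measure_mono hsub2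
        _ = ν (v • A \ A) := measure_smul ν g₀ _
        _ < c := hVsmall v hv
    exact absurd (key _ hxS) (not_le.2 hle)
  have hScomp : IsCompact S := by
    refine (hpre.mul hpre.inv).of_isClosed_subset hSclosed ?_
    exact mul_subset_mul subset_closure (Set.inv_subset_inv.2 subset_closure)
  -- the stabilizer subgroup
  set H : Subgroup G := MulAction.stabilizer G S with hHdef
  obtain ⟨V', hV'1, hV'S⟩ := compact_open_separated_mul_left hScomp hSopen Subset.rfl
  obtain ⟨O', hO'V', hO'open, hO'1⟩ := mem_nhds_iff.1 hV'1
  have hsubO' : ∀ h ∈ O', h • S ⊆ S := by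
    rintro h hh x ⟨y, hy, rfl⟩
    have : h * y ∈ V' * S := mul_mem_mul (hO'V' hh) hy
    simpa [smul_eq_mul] using hV'S this
  have hWH : O' ∩ O'⁻¹ ⊆ (H : Set G) := by
    rintro g ⟨hg1, hg2⟩
    refine MulAction.mem_stabilizer_iff.2 (subset_antisymm (hsubO' g hg1) ?_)
    intro x hx
    have hxg : g⁻¹ • x ∈ S := hsubO' g⁻¹ hg2 ⟨x, hx, rfl⟩
    exact ⟨g⁻¹ • x, hxg, smul_inv_smul _ _⟩
  have hWnhds : (H : Set G) ∈ nhds (1 : G) :=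
    Filter.mem_of_superset
      ((hO'open.inter hO'open.inv).mem_nhds ⟨hO'1, by simpa using hO'1⟩) hWH
  have hHopen : IsOpen (H : Set G) := Subgroup.isOpen_of_mem_nhds H hWnhds
  have hHS : ∀ g ∈ H, ∀ s ∈ S, g * s ∈ S := by
    intro g hg s hs
    have hgst : g • S = S := hg
    rw [← hgst]
    exact ⟨s, hs, rfl⟩
  have hHsubS : (H : Set G) ⊆ S := fun g hg => by
    simpa using hHS g hg 1 h1S
  have hHclosed : IsClosed (H : Set G) := Subgroup.isClosed_of_isOpen H hHopen
  have hHcomp : IsCompact (H : Set G) := hScomp.of_isClosed_subset hHclosed hHsubS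
  -- finitely many cosets
  have hcosetsub : ∀ s ∈ S, (H : Set G) * {s} ⊆ S := by
    rintro s hs x ⟨h, hh, y, hy, rfl⟩
    have hy' : y = s := hy
    rw [hy']
    exact hHS h hh s hs
  have hcover : S ⊆ ⋃ s ∈ S, (H : Set G) * {s} := by
    intro s hs
    exact Set.mem_biUnion hs ⟨1, one_mem H, s, rfl, one_mul s⟩
  obtain ⟨T0, hT0S, hT0fin, hT0cover⟩ :=
    hScomp.elim_finite_subcover_image (fun s _ => hHopen.mul_right) hcover
  refine ⟨H, hHcomp, hHopen, hT0fin.toFinset, subset_antisymm ?_ ?_⟩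
  · intro x hx
    obtain ⟨t, ht, hxt⟩ := mem_iUnion₂.1 (hT0cover hx)
    exact mem_iUnion₂.2 ⟨t, hT0fin.mem_toFinset.2 ht, hxt⟩
  · intro x hx
    obtain ⟨t, ht, hxt⟩ := mem_iUnion₂.1 hx
    exact hcosetsub t (hT0S (hT0fin.mem_toFinset.1 ht)) hxt

theorem continuous_small_doubling {G : Type*} [Group G] [TopologicalSpace G]
    [IsTopologicalGroup G] [LocallyCompactSpace G] [T2Space G]
    [MeasurableSpace G] [BorelSpace G]
    (μ : MeasureTheory.Measure G) [μ.IsHaarMeasure] [μ.IsMulRightInvariant]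
    (A : Set G) (hopen : IsOpen A) (hpre : IsCompact (closure A)) (hne : A.Nonempty)
    (ε : ℝ) (hε : 0 < ε)
    (hdoub : μ (A⁻¹ * A) ≤ ENNReal.ofReal (2 - ε) * μ A) :
    ∃ H : Subgroup G, IsCompact (H : Set G) ∧ IsOpen (H : Set G) ∧
      ∃ T : Finset G, A * A⁻¹ = ⋃ t ∈ T, (H : Set G) * {t} := by
  obtain ⟨K₀⟩ : Nonempty (TopologicalSpace.PositiveCompacts G) := inferInstance
  set ν : MeasureTheory.Measure G := MeasureTheory.Measure.haarMeasure K₀ with hν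
  have hA0 : 0 < μ A := hopen.measure_pos μ hne
  have hAfin : μ A ≠ ⊤ := ((measure_mono subset_closure).trans_lt hpre.measure_lt_top).ne
  have hdoub2 : μ (A⁻¹ * A) < 2 * μ A := by
    refine hdoub.trans_lt ?_
    have h1 : ENNReal.ofReal (2 - ε) < 2 := by
      calc ENNReal.ofReal (2 - ε) < ENNReal.ofReal 2 :=
            (ENNReal.ofReal_lt_ofReal_iff (by norm_num)).2 (by linarith)
        _ = 2 := by norm_num
    exact (ENNReal.mul_lt_mul_iff_left hA0.ne' hAfin).2 h1
  have hclos1 : IsCompact (closure (A⁻¹ * A)) := by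
    have h2 : IsCompact ((closure A)⁻¹ * closure A) := hpre.inv.mul hpre
    exact h2.of_isClosed_subset isClosed_closure
      (closure_minimal (mul_subset_mul (Set.inv_subset_inv.2 subset_closure) subset_closure)
        h2.isClosed)
  set r : ℝ≥0 := MeasureTheory.Measure.haarScalarFactor μ ν with hr
  have hr0 : r ≠ 0 :=
    (MeasureTheory.Measure.haarScalarFactor_pos_of_isHaarMeasure μ ν).ne'
  have e1 : μ (A⁻¹ * A) = r • ν (A⁻¹ * A) :=
    MeasureTheory.Measure.measure_isMulInvariant_eq_smul_of_isCompact_closure μ ν hclos1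
  have e2 : μ A = r • ν A :=
    MeasureTheory.Measure.measure_isMulInvariant_eq_smul_of_isCompact_closure μ ν hpre
  have hlt : ν (A⁻¹ * A) < 2 * ν A := by
    rw [e1, e2] at hdoub2
    rw [ENNReal.smul_def, ENNReal.smul_def, smul_eq_mul, smul_eq_mul, mul_left_comm] at hdoub2
    exact (ENNReal.mul_lt_mul_iff_right (by exact_mod_cast hr0) ENNReal.coe_ne_top).1 hdoub2
  exact aux_small_doubling ν A hopen hpre hne hlt
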